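/- Theorem (no proxy discrimination for mean-adjusted predictors). Let (Ω, 𝔉, ℙ) be a probability space, E a measurable space, T : Ω → E measurable, g : E → ℝ measurable with g∘T integrable with respect to ℙ, μ_X ∈ ℝ, and r : ℝ → ℝ Borel measurable. For p ∈ ℝ let X_p := (fun ω => g(T ω) + μ_X·p) be the feature under the intervention do(P = p). Then 𝔼[X_p] = 𝔼[g∘T] + μ_X·p, and for all p, p' ∈ ℝ the pushforward measure of ℙ under ω ↦ r(X_p(ω) − 𝔼[X_p]) equals the pushforward measure of ℙ under ω ↦ r(X_{p'}(ω) − 𝔼[X_{p'}]); that is, the predictor Ŷ = r(X − 𝔼[X | do(P)]) exhibits no proxy discrimination. -/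

import Mathlib

open MeasureTheory

/-- No proxy discrimination for mean-adjusted predictors (Theorem 4.6, Chapter 4).
Under the intervention `do(P = p)` the feature is `X_p = g ∘ T + μ_X · p`; then
`𝔼[X_p] = 𝔼[g ∘ T] + μ_X · p`, and the law of `r (X_p − 𝔼[X_p])` does not depend on `p`. -/
theorem no_proxy_discrimination_mean_adjusted
    {Ω E : Type*} [MeasurableSpace Ω] [MeasurableSpace E]
    (μ : Measure Ω) [IsProbabilityMeasure μ]
    (T : Ω → E) (hT : Measurable T)
    (g : E → ℝ) (hg : Measurable g)
    (hInt : Integrable (fun ω => g (T ω)) μ)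
    (μX : ℝ) (r : ℝ → ℝ) (hr : Measurable r) :
    (∀ p : ℝ, ∫ ω, (g (T ω) + μX * p) ∂μ = (∫ ω, g (T ω) ∂μ) + μX * p) ∧
    (∀ p p' : ℝ,
      Measure.map
        (fun ω => r ((g (T ω) + μX * p) - ∫ ω', (g (T ω') + μX * p) ∂μ)) μ =
      Measure.map
        (fun ω => r ((g (T ω) + μX * p') - ∫ ω', (g (T ω') + μX * p') ∂μ)) μ) := by
  have hmean : ∀ p : ℝ, ∫ ω, (g (T ω) + μX * p) ∂μ = (∫ ω, g (T ω) ∂μ) + μX * p := by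
    intro p
    rw [integral_add hInt (integrable_const _), integral_const, probReal_univ]
    simp
  refine ⟨hmean, fun p p' => ?_⟩
  have : ∀ q : ℝ, (fun ω => r ((g (T ω) + μX * q) - ∫ ω', (g (T ω') + μX * q) ∂μ))
      = fun ω => r (g (T ω) - ∫ ω', g (T ω') ∂μ) := by
    intro q
    funext ω
    rw [hmean q]
    ring_nf
  rw [this p, this p']
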